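/- Fix integers h ≥ 2 and k with ⌈3(h−1)/2⌉ ≤ k ≤ 3h−3. Then there exists N such that for all d ≥ N, the number of fundamental parallelepiped points λ = (λ_0, …, λ_{d−1}) of P_{2,d} whose height Σ_j λ_j equals h and whose coordinate λ_2 equals b/2^k for some odd integer b with 0 < b < 2^k, is exactly f(k,h). -/

import Mathlib

open scoped BigOperators Pointwise
set_option maxHeartbeats 1600000

/-- `lam` is a fundamental parallelepiped point for the simplex with vertices `v`:
`0 ≤ lam i < 1` for all `i` and `∑ i, lam i • (1, v i) ∈ ℤ^{n+1}`. -/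
def IsFPP {N n : ℕ} (v : Fin N → Fin n → ℝ) (lam : Fin N → ℝ) : Prop :=
  (∀ i, 0 ≤ lam i ∧ lam i < 1) ∧
  (∃ z : ℤ, ∑ i, lam i = (z : ℝ)) ∧
  (∀ j, ∃ z : ℤ, ∑ i, lam i * v i j = (z : ℝ))

/-- Vertices of the simplex `P_{m,d} ⊆ ℝ^{d-1}`: `u_0 = 0`, `u_1 = e_1`,
`u_j = e_{j-1} + m e_j` for `2 ≤ j ≤ d-1` (coordinates are 0-indexed). -/
def Pvert (m d : ℕ) : Fin d → Fin (d - 1) → ℝ := fun j i =>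
  if (j : ℕ) = 0 then 0
  else if (j : ℕ) = 1 then (if (i : ℕ) = 0 then 1 else 0)
  else if (i : ℕ) = (j : ℕ) - 2 then 1
  else if (i : ℕ) = (j : ℕ) - 1 then (m : ℝ)
  else 0

/-- Binomial coefficient `C(a,b)` for integers, with `C(a,b) = 0` when `b < 0` or `b > a`. -/
def binomZ (a b : ℤ) : ℤ := if 0 ≤ b ∧ b ≤ a then (a.toNat.choose b.toNat : ℤ) else 0

/-- `f(k,h) = 2[C(k-2, 3(h-1)-k) + C(k-2, 3(h-1)-k-1) + C(k-2, 3(h-1)-k-2)]`. -/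
def fkh (k h : ℤ) : ℤ :=
  2 * (binomZ (k - 2) (3 * (h - 1) - k) + binomZ (k - 2) (3 * (h - 1) - k - 1) +
    binomZ (k - 2) (3 * (h - 1) - k - 2))


namespace Stmt13Aux


/-- coefficient from bit: 2 if true else 1 -/
noncomputable def cb (s : ℕ → Bool) (i : ℕ) : ℝ := if s i then 2 else 1

/-- the x-sequence, bottom-up: `w s 0 = 1/2`, `w s (i+1) = (cb s i - w s i)/2`. -/
noncomputable def w (s : ℕ → Bool) : ℕ → ℝ
  | 0 => 1/2
  | (i+1) => (cb s i - w s i)/2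

lemma w_zero (s : ℕ → Bool) : w s 0 = 1/2 := rfl
lemma w_succ (s : ℕ → Bool) (i : ℕ) : w s (i+1) = (cb s i - w s i)/2 := rfl

lemma cb_one_le (s : ℕ → Bool) (i : ℕ) : 1 ≤ cb s i := by
  unfold cb; split <;> norm_num

lemma cb_le_two (s : ℕ → Bool) (i : ℕ) : cb s i ≤ 2 := by
  unfold cb; split <;> norm_num

lemma w_odd (s : ℕ → Bool) (i : ℕ) :
    ∃ o : ℕ, Odd o ∧ 0 < o ∧ o < 2^(i+1) ∧ w s i = (o : ℝ) / 2^(i+1) := by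
  induction i with
  | zero => exact ⟨1, odd_one, by norm_num, by norm_num, by norm_num [w_zero]⟩
  | succ i ih =>
    obtain ⟨o, ho, hop, holt, hw⟩ := ih
    have hpow : (2:ℕ)^(i+2) = 2 * 2^(i+1) := by ring
    have heven2 : Even ((2:ℕ)^(i+2)) := by
      exact (Nat.even_pow (n := i+2)).2 ⟨even_two, by omega⟩
    have heven1 : Even ((2:ℕ)^(i+1)) := by
      exact (Nat.even_pow (n := i+1)).2 ⟨even_two, by omega⟩
    by_cases hb : s i
    · refine ⟨2^(i+2) - o, Nat.Even.sub_odd (by omega) heven2 ho, by omega, by omega, ?_⟩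
      rw [w_succ, hw]
      unfold cb; rw [if_pos hb]
      push_cast [Nat.cast_sub (by omega : o ≤ 2^(i+2))]
      have h2 : ((2:ℝ))^(i+2) = 2^(i+1) * 2 := by ring
      rw [h2]
      field_simp
    · refine ⟨2^(i+1) - o, Nat.Even.sub_odd (by omega) heven1 ho, by omega, by omega, ?_⟩
      rw [w_succ, hw]
      unfold cb; rw [if_neg (by simp [hb])]
      push_cast [Nat.cast_sub (by omega : o ≤ 2^(i+1))]
      have h2 : ((2:ℝ))^(i+2) = 2^(i+1) * 2 := by ring
      rw [h2]
      field_simp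

lemma w_pos (s : ℕ → Bool) (i : ℕ) : 0 < w s i := by
  obtain ⟨o, _, hop, _, hw⟩ := w_odd s i
  rw [hw]
  have : (0:ℝ) < o := by exact_mod_cast hop
  positivity

lemma w_lt_one (s : ℕ → Bool) (i : ℕ) : w s i < 1 := by
  obtain ⟨o, _, _, holt, hw⟩ := w_odd s i
  rw [hw, div_lt_one (by positivity)]
  exact_mod_cast holt

lemma w_ne_half (s : ℕ → Bool) (i : ℕ) (hi : 1 ≤ i) : w s i ≠ 1/2 := by
  obtain ⟨o, ho, _, _, hw⟩ := w_odd s i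
  rw [hw]
  intro hc
  have h2 : (o : ℝ) * 2 = 2^(i+1) := by
    field_simp at hc; linarith
  have h3 : (o * 2 : ℕ) = 2^(i+1) := by exact_mod_cast h2
  rcases ho with ⟨m, hm⟩
  rcases i with _|i
  · omega
  · have : (2:ℕ)^(i+2) = 4 * 2^i := by ring
    omega

lemma w_gt_half (s : ℕ → Bool) (i : ℕ) (ht : s i = true) : 1/2 < w s (i+1) := by
  rw [w_succ]; unfold cb; rw [if_pos ht]
  have := w_lt_one s i; linarith

lemma w_lt_half (s : ℕ → Bool) (i : ℕ) (ht : s i = false) : w s (i+1) < 1/2 := by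
  rw [w_succ]; unfold cb; rw [if_neg (by simp [ht])]
  have := w_pos s i; linarith

lemma w_sum (s : ℕ → Bool) (n : ℕ) :
    3 * (∑ i ∈ Finset.range (n+1), w s i) = 1 + (∑ i ∈ Finset.range n, cb s i) + w s n := by
  induction n with
  | zero => simp [w_zero]; norm_num
  | succ n ih =>
    rw [Finset.sum_range_succ, Finset.sum_range_succ (f := cb s)]
    rw [mul_add, ih, w_succ]
    ring

lemma w_congr (s s' : ℕ → Bool) (i : ℕ) (hs : ∀ j < i, s j = s' j) : w s i = w s' i := by
  induction i with
  | zero => rfl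
  | succ i ih =>
    rw [w_succ, w_succ, ih (fun j hj => hs j (by omega))]
    unfold cb
    rw [hs i (by omega)]



lemma binomZ_nat (n : ℕ) (r : ℤ) (h0 : 0 ≤ r) (h1 : r ≤ n) :
    binomZ n r = (n.choose r.toNat : ℤ) := by
  unfold binomZ
  rw [if_pos ⟨h0, by exact_mod_cast h1⟩, Int.toNat_natCast]

lemma binomZ_zero_of_neg (a b : ℤ) (h : b < 0) : binomZ a b = 0 := by
  unfold binomZ; rw [if_neg (by omega)]

lemma binomZ_zero_of_gt (a b : ℤ) (h : a < b) : binomZ a b = 0 := by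
  unfold binomZ; rw [if_neg (by omega)]

lemma binomZ_pascal (a b : ℤ) (ha : 0 ≤ a) :
    binomZ (a+1) b = binomZ a b + binomZ a (b-1) := by
  rcases lt_or_ge b 0 with hb | hb
  · rw [binomZ_zero_of_neg _ _ hb, binomZ_zero_of_neg _ _ hb,
      binomZ_zero_of_neg _ _ (by omega)]
    ring
  rcases eq_or_lt_of_le hb with hb0 | hbpos
  · unfold binomZ
    rw [if_pos ⟨by omega, by omega⟩, if_pos ⟨by omega, by omega⟩, if_neg (by omega)]
    rw [← hb0]
    simp
  rcases lt_or_ge a b with hab | hab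
  · rcases lt_or_ge (a+1) b with hba' | hba'
    · rw [binomZ_zero_of_gt _ _ hba', binomZ_zero_of_gt _ _ hab,
        binomZ_zero_of_gt _ _ (by omega)]
      ring
    · have hba : b = a + 1 := by omega
      unfold binomZ
      rw [if_pos ⟨by omega, by omega⟩, if_neg (by omega), if_pos ⟨by omega, by omega⟩]
      have h1 : b.toNat = (a+1).toNat := by omega
      have h2 : (b-1).toNat = a.toNat := by omega
      have h3 : (a+1).toNat = a.toNat + 1 := by omega
      rw [h1, h2, h3, Nat.choose_self, Nat.choose_self]
      ring
  · unfold binomZ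
    rw [if_pos ⟨by omega, by omega⟩, if_pos ⟨by omega, by omega⟩, if_pos ⟨by omega, by omega⟩]
    have h1 : (a+1).toNat = a.toNat + 1 := by omega
    have h2 : b.toNat = (b-1).toNat + 1 := by omega
    rw [h1, h2, Nat.choose_succ_succ']
    push_cast
    ring

variable {n : ℕ}

lemma card_filter_cardZ (r : ℤ) :
    ((Finset.univ.filter (fun t : Finset (Fin n) => (t.card : ℤ) = r)).card : ℤ)
      = binomZ n r := by
  rcases lt_or_ge r 0 with hr | hr
  · rw [binomZ_zero_of_neg _ _ hr]
    have : Finset.univ.filter (fun t : Finset (Fin n) => (t.card : ℤ) = r) = ∅ :=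
      Finset.filter_false_of_mem (fun t _ => by omega)
    simp [this]
  rcases lt_or_ge (n : ℤ) r with hr2 | hr2
  · rw [binomZ_zero_of_gt _ _ hr2]
    have : Finset.univ.filter (fun t : Finset (Fin n) => (t.card : ℤ) = r) = ∅ :=
      Finset.filter_false_of_mem (fun t _ => by
        have := Finset.card_le_card (Finset.subset_univ t)
        rw [Finset.card_univ, Fintype.card_fin] at this
        omega)
    simp [this]
  · rw [binomZ_nat n r hr hr2]
    have : Finset.univ.filter (fun t : Finset (Fin n) => (t.card : ℤ) = r)
        = Finset.powersetCard r.toNat Finset.univ := by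
      ext t
      simp only [Finset.mem_filter, Finset.mem_univ, true_and, Finset.mem_powersetCard_univ]
      omega
    rw [this, Finset.card_powersetCard, Finset.card_univ, Fintype.card_fin]

lemma card_filter_cardZ_notMem (r : ℤ) (i0 : Fin n) (hn : 1 ≤ n) :
    ((Finset.univ.filter (fun t : Finset (Fin n) => (t.card : ℤ) = r ∧ i0 ∉ t)).card : ℤ)
      = binomZ (n - 1) r := by
  rcases lt_or_ge r 0 with hr | hr
  · rw [binomZ_zero_of_neg _ _ hr]
    have : Finset.univ.filter (fun t : Finset (Fin n) => (t.card : ℤ) = r ∧ i0 ∉ t) = ∅ :=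
      Finset.filter_false_of_mem (fun t _ => by rintro ⟨hc, -⟩; omega)
    simp [this]
  rcases lt_or_ge ((n:ℤ) - 1) r with hr2 | hr2
  · rw [binomZ_zero_of_gt _ _ hr2]
    have : Finset.univ.filter (fun t : Finset (Fin n) => (t.card : ℤ) = r ∧ i0 ∉ t) = ∅ :=
      Finset.filter_false_of_mem (fun t _ => by
        rintro ⟨hcard, hmem⟩
        have hsub : t ⊆ Finset.univ.erase i0 := Finset.subset_erase.2 ⟨Finset.subset_univ t, hmem⟩
        have := Finset.card_le_card hsub
        rw [Finset.card_erase_of_mem (Finset.mem_univ i0), Finset.card_univ,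
          Fintype.card_fin] at this
        omega)
    simp [this]
  · have heq : Finset.univ.filter (fun t : Finset (Fin n) => (t.card : ℤ) = r ∧ i0 ∉ t)
        = Finset.powersetCard r.toNat (Finset.univ.erase i0) := by
      ext t
      simp only [Finset.mem_filter, Finset.mem_univ, true_and, Finset.mem_powersetCard,
        Finset.subset_erase]
      constructor
      · rintro ⟨h1, h2⟩; exact ⟨⟨Finset.subset_univ t, h2⟩, by omega⟩
      · rintro ⟨⟨_, h2⟩, h3⟩; exact ⟨by omega, h2⟩
    rw [heq, Finset.card_powersetCard, Finset.card_erase_of_mem (Finset.mem_univ i0),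
      Finset.card_univ, Fintype.card_fin]
    have hc : (n:ℤ) - 1 = ((n - 1 : ℕ) : ℤ) := by omega
    rw [hc, binomZ_nat (n-1) r hr (by omega)]

lemma card_filter_cardZ_mem (r : ℤ) (i0 : Fin n) (hn : 1 ≤ n) :
    ((Finset.univ.filter (fun t : Finset (Fin n) => (t.card : ℤ) = r ∧ i0 ∈ t)).card : ℤ)
      = binomZ (n - 1) (r - 1) := by
  have hbij : (Finset.univ.filter (fun t : Finset (Fin n) => (t.card : ℤ) = r ∧ i0 ∈ t)).card
      = (Finset.univ.filter (fun t : Finset (Fin n) => (t.card : ℤ) = r - 1 ∧ i0 ∉ t)).card := by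
    apply Finset.card_bij (fun t _ => t.erase i0)
    · intro t ht
      simp only [Finset.mem_filter, Finset.mem_univ, true_and] at ht ⊢
      refine ⟨?_, Finset.notMem_erase i0 t⟩
      rw [Finset.card_erase_of_mem ht.2]
      have : 1 ≤ t.card := Finset.card_pos.2 ⟨i0, ht.2⟩
      omega
    · intro t1 h1 t2 h2 he
      simp only [Finset.mem_filter, Finset.mem_univ, true_and] at h1 h2
      have := congrArg (insert i0) he
      rwa [Finset.insert_erase h1.2, Finset.insert_erase h2.2] at this
    · intro t ht
      simp only [Finset.mem_filter, Finset.mem_univ, true_and] at ht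
      refine ⟨insert i0 t, ?_, ?_⟩
      · simp only [Finset.mem_filter, Finset.mem_univ, true_and]
        rw [Finset.card_insert_of_notMem ht.2]
        exact ⟨by push_cast; omega, Finset.mem_insert_self i0 t⟩
      · rw [Finset.erase_insert ht.2]
  rw [hbij]
  exact card_filter_cardZ_notMem (r-1) i0 hn



lemma sum_if_eq {d : ℕ} (v : ℕ) (f : Fin d → ℝ) :
    (∑ i : Fin d, if (i:ℕ) = v then f i else 0) = if hv : v < d then f ⟨v, hv⟩ else 0 := by
  rcases Nat.lt_or_ge v d with hv | hv
  · rw [dif_pos hv]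
    have hcong : ∀ i : Fin d, (if (i:ℕ) = v then f i else 0) = (if i = ⟨v, hv⟩ then f i else 0) :=
      fun i => by congr 1; simp [Fin.ext_iff]
    rw [Finset.sum_congr rfl (fun i _ => hcong i),
      Finset.sum_ite_eq' Finset.univ (⟨v, hv⟩ : Fin d) f, if_pos (Finset.mem_univ _)]
  · rw [dif_neg (by omega)]
    apply Finset.sum_eq_zero
    intro i _
    rw [if_neg (by have := i.2; omega)]

lemma sum_pvert {d : ℕ} (hd : 3 ≤ d) (lam : Fin d → ℝ) (j : Fin (d-1)) :
    ∑ i, lam i * Pvert 2 d i j =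
      (if h0 : (j:ℕ) = 0 then lam ⟨1, by omega⟩ else 2 * lam ⟨(j:ℕ)+1, by have := j.2; omega⟩)
      + (if hj : (j:ℕ)+2 < d then lam ⟨(j:ℕ)+2, hj⟩ else 0) := by
  have key : ∀ i : Fin d, lam i * Pvert 2 d i j =
      (if (i:ℕ) = (if (j:ℕ) = 0 then 1 else (j:ℕ)+1) then
        (if (j:ℕ) = 0 then 1 else 2) * lam i else 0)
      + (if (i:ℕ) = (j:ℕ)+2 then lam i else 0) := by
    intro i
    have hi := i.2
    have hj2 := j.2
    unfold Pvert
    push_cast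
    split_ifs <;> first | (exfalso; omega) | ring
  rw [Finset.sum_congr rfl (fun i _ => key i), Finset.sum_add_distrib]
  rw [sum_if_eq ((j:ℕ)+2) lam]
  by_cases h0 : (j:ℕ) = 0
  · rw [dif_pos h0]
    simp only [h0, reduceIte]
    rw [sum_if_eq 1 (fun i => 1 * lam i), dif_pos (by omega : 1 < d)]
    norm_num
  · rw [dif_neg h0]
    simp only [if_neg h0]
    rw [sum_if_eq ((j:ℕ)+1) (fun i => 2 * lam i), dif_pos (by have := j.2; omega)]


end Stmt13Aux

namespace Stmt13Aux

/-- the candidate FPP built from bits `s`; `h` is the target height. -/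
noncomputable def lamF (h : ℤ) (κ d : ℕ) (s : ℕ → Bool) : Fin d → ℝ := fun j =>
  if (j:ℕ) = 0 then (h:ℝ) - (1 - w s (κ+1)) - ∑ i ∈ Finset.range (κ+2), w s i
  else if (j:ℕ) = 1 then 1 - w s (κ+1)
  else if (j:ℕ) ≤ κ+3 then w s (κ+3 - (j:ℕ))
  else 0

lemma lamF_eval0 {h : ℤ} {κ d : ℕ} {s : ℕ → Bool} (hj : 0 < d) :
    lamF h κ d s ⟨0, hj⟩ = (h:ℝ) - (1 - w s (κ+1)) - ∑ i ∈ Finset.range (κ+2), w s i := by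
  unfold lamF; norm_num

lemma lamF_eval1 {h : ℤ} {κ d : ℕ} {s : ℕ → Bool} (hj : 1 < d) :
    lamF h κ d s ⟨1, hj⟩ = 1 - w s (κ+1) := by
  unfold lamF; norm_num

lemma lamF_eval₂ {h : ℤ} {κ d : ℕ} {s : ℕ → Bool} {j : ℕ} (h2 : 2 ≤ j) (h3 : j ≤ κ+3)
    (hj : j < d) : lamF h κ d s ⟨j, hj⟩ = w s (κ+3-j) := by
  unfold lamF
  have hv : ((⟨j, hj⟩ : Fin d) : ℕ) = j := rfl
  simp only [hv]
  rw [if_neg (by omega), if_neg (by omega), if_pos (by omega)]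

lemma lamF_eval_top {h : ℤ} {κ d : ℕ} {s : ℕ → Bool} {j : ℕ} (h2 : κ+4 ≤ j)
    (hj : j < d) : lamF h κ d s ⟨j, hj⟩ = 0 := by
  unfold lamF
  have hv : ((⟨j, hj⟩ : Fin d) : ℕ) = j := rfl
  simp only [hv]
  rw [if_neg (by omega), if_neg (by omega), if_neg (by omega)]

/-- value of `lamF` as a function of a natural index (for sum manipulation). -/
lemma lamF_sum {h : ℤ} {κ d : ℕ} {s : ℕ → Bool} (hd : κ+7 ≤ d) :
    ∑ j : Fin d, lamF h κ d s j = (h : ℝ) := by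
  have hrw : ∀ j : Fin d, lamF h κ d s j =
      (if (j:ℕ) = 0 then (h:ℝ) - (1 - w s (κ+1)) - ∑ i ∈ Finset.range (κ+2), w s i
       else if (j:ℕ) = 1 then 1 - w s (κ+1)
       else if (j:ℕ) ≤ κ+3 then w s (κ+3 - (j:ℕ))
       else 0) := fun j => rfl
  rw [Finset.sum_congr rfl (fun j _ => hrw j)]
  rw [Fin.sum_univ_eq_sum_range (fun j => if j = 0 then (h:ℝ) - (1 - w s (κ+1)) -
    ∑ i ∈ Finset.range (κ+2), w s i else if j = 1 then 1 - w s (κ+1)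
    else if j ≤ κ+3 then w s (κ+3 - j) else 0) d]
  set F : ℕ → ℝ := fun j => if j = 0 then (h:ℝ) - (1 - w s (κ+1)) -
    ∑ i ∈ Finset.range (κ+2), w s i else if j = 1 then 1 - w s (κ+1)
    else if j ≤ κ+3 then w s (κ+3 - j) else 0 with hF
  have hsplit : ∑ j ∈ Finset.range d, F j
      = ∑ j ∈ Finset.range (κ+4), F j + ∑ j ∈ Finset.Ico (κ+4) d, F j := by
    rw [Finset.range_eq_Ico, Finset.range_eq_Ico]
    exact (Finset.sum_Ico_consecutive F (Nat.zero_le (κ+4)) (by omega : κ+4 ≤ d)).symm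
  have htail : ∑ j ∈ Finset.Ico (κ+4) d, F j = 0 := by
    apply Finset.sum_eq_zero
    intro j hj
    rw [Finset.mem_Ico] at hj
    simp only [hF]
    rw [if_neg (by omega), if_neg (by omega), if_neg (by omega)]
  have hhead : ∑ j ∈ Finset.range (κ+4), F j
      = F 0 + F 1 + ∑ j ∈ Finset.Ico 2 (κ+4), F j := by
    rw [Finset.range_eq_Ico, ← Finset.sum_Ico_consecutive F (by omega : 0 ≤ 2) (by omega)]
    rw [show Finset.Ico 0 2 = {0, 1} from rfl]
    rw [Finset.sum_insert (by norm_num), Finset.sum_singleton]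
  have hmid : ∑ j ∈ Finset.Ico 2 (κ+4), F j = ∑ i ∈ Finset.range (κ+2), w s i := by
    rw [Finset.sum_Ico_eq_sum_range]
    have : ∀ t ∈ Finset.range (κ+4-2), F (2+t) = w s (κ+1-t) := by
      intro t ht
      rw [Finset.mem_range] at ht
      simp only [hF]
      rw [if_neg (by omega), if_neg (by omega), if_pos (by omega)]
      congr 1
      omega
    rw [Finset.sum_congr rfl this]
    rw [show κ+4-2 = κ+2 from by omega]
    rw [← Finset.sum_range_reflect (fun t => w s t) (κ+2)]
    apply Finset.sum_congr rfl
    intro t ht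
    rw [Finset.mem_range] at ht
    congr 1
  rw [hsplit, htail, hhead, hmid]
  have hF0 : F 0 = (h:ℝ) - (1 - w s (κ+1)) - ∑ i ∈ Finset.range (κ+2), w s i := by simp [hF]
  have hF1 : F 1 = 1 - w s (κ+1) := by simp [hF]
  rw [hF0, hF1]
  ring


/-- bits from a finset -/
def bits (κ : ℕ) (t : Finset (Fin (κ+1))) : ℕ → Bool := fun i =>
  if hi : i < κ+1 then decide ((⟨i, hi⟩ : Fin (κ+1)) ∈ t) else false

lemma bits_eq (κ : ℕ) (t : Finset (Fin (κ+1))) (i : Fin (κ+1)) :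
    bits κ t i.1 = decide (i ∈ t) := by
  unfold bits
  rw [dif_pos i.2]

lemma cb_bits_sum (κ : ℕ) (t : Finset (Fin (κ+1))) :
    ∑ i ∈ Finset.range (κ+1), cb (bits κ t) i = (κ+1 : ℝ) + t.card := by
  rw [← Fin.sum_univ_eq_sum_range (fun i => cb (bits κ t) i) (κ+1)]
  have key : ∀ i : Fin (κ+1), cb (bits κ t) i.1 = 1 + (if i ∈ t then (1:ℝ) else 0) := by
    intro i
    unfold cb
    rw [bits_eq]
    by_cases hi : i ∈ t <;> simp [hi] <;> norm_num
  rw [Finset.sum_congr rfl (fun i _ => key i), Finset.sum_add_distrib]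
  rw [Finset.sum_ite_mem, Finset.univ_inter, Finset.sum_const, Finset.sum_const]
  simp

/-- the special index corresponding to the bit deciding `x₂ < 1/2 or > 1/2`. -/
def itop (κ : ℕ) : Fin (κ+1) := ⟨κ, Nat.lt_succ_self κ⟩

/-- the counting condition -/
def cond (h : ℤ) (κ : ℕ) (t : Finset (Fin (κ+1))) : Prop :=
  ((t.card : ℤ) = 3*h - 7 - κ ∧ itop κ ∉ t) ∨
  ((t.card : ℤ) = 3*h - 6 - κ) ∨
  ((t.card : ℤ) = 3*h - 5 - κ) ∨
  ((t.card : ℤ) = 3*h - 4 - κ ∧ itop κ ∈ t)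

lemma bits_itop (κ : ℕ) (t : Finset (Fin (κ+1))) :
    bits κ t κ = decide (itop κ ∈ t) := bits_eq κ t (itop κ)

/-- the height condition on `λ₀` is equivalent to `cond`. -/
lemma lam0_iff (h : ℤ) (κ : ℕ) (t : Finset (Fin (κ+1))) :
    (0 ≤ (h:ℝ) - (1 - w (bits κ t) (κ+1)) - ∑ i ∈ Finset.range (κ+2), w (bits κ t) i ∧
     (h:ℝ) - (1 - w (bits κ t) (κ+1)) - ∑ i ∈ Finset.range (κ+2), w (bits κ t) i < 1)
      ↔ cond h κ t := by
  set s := bits κ t with hs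
  set x := w s (κ+1) with hx
  have hx0 : 0 < x := w_pos s (κ+1)
  have hx1 : x < 1 := w_lt_one s (κ+1)
  have hxh : x ≠ 1/2 := w_ne_half s (κ+1) (by omega)
  have hS : 3 * (∑ i ∈ Finset.range (κ+2), w s i)
      = 1 + ((κ+1:ℝ) + t.card) + x := by
    rw [w_sum s (κ+1), cb_bits_sum κ t]
  set S := ∑ i ∈ Finset.range (κ+2), w s i with hSdef
  -- λ₀ = h - 1 + x - S ; 3λ₀ = 3h - 5 - κ - B + 2x
  have h3 : 3 * ((h:ℝ) - (1 - x) - S) = (3*h - 5 - κ - t.card : ℝ) + 2*x := by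
    have : (3:ℝ) * S = 1 + ((κ+1:ℝ) + t.card) + x := hS
    push_cast
    linarith
  set M : ℤ := 3*h - 5 - κ - t.card with hM
  have hMr : ((M:ℝ)) = (3*h - 5 - κ - t.card : ℝ) := by push_cast [hM]; ring
  have hgthalf : itop κ ∈ t → 1/2 < x := by
    intro hmem
    exact w_gt_half s κ (by rw [hs, bits_itop]; simpa using hmem)
  have hlthalf : itop κ ∉ t → x < 1/2 := by
    intro hmem
    exact w_lt_half s κ (by rw [hs, bits_itop]; simpa using hmem)
  constructor
  · rintro ⟨hl, hr⟩
    have hl3 : 0 ≤ (M:ℝ) + 2*x := by rw [hMr]; linarith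
    have hr3 : (M:ℝ) + 2*x < 3 := by rw [hMr]; linarith
    have hMlb : -1 ≤ M := by
      have h1 : (-2:ℝ) < (M:ℝ) := by linarith
      have h2 : (-2:ℤ) < M := by exact_mod_cast h1
      omega
    have hMub : M ≤ 2 := by
      have h1 : (M:ℝ) < 3 := by linarith
      have h2 : M < (3:ℤ) := by exact_mod_cast h1
      omega
    -- case on M
    have hcases : M = -1 ∨ M = 0 ∨ M = 1 ∨ M = 2 := by omega
    unfold cond
    rcases hcases with hMv | hMv | hMv | hMv
    · -- M = -1 : need x > 1/2, so itop ∈ t  (B = 3h-4-κ)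
      have hxgt : 1/2 < x := by
        rcases lt_or_gt_of_ne hxh with hlt | hgt
        · exfalso
          have : (M:ℝ) = -1 := by rw [hMv]; norm_num
          linarith
        · exact hgt
      have hmem : itop κ ∈ t := by
        by_contra hc
        have := hlthalf hc
        linarith
      exact Or.inr (Or.inr (Or.inr ⟨by omega, hmem⟩))
    · exact Or.inr (Or.inr (Or.inl (by omega)))
    · exact Or.inr (Or.inl (by omega))
    · -- M = 2 : need x < 1/2, so itop ∉ t (B = 3h-7-κ)
      have hxlt : x < 1/2 := by
        rcases lt_or_gt_of_ne hxh with hlt | hgt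
        · exact hlt
        · exfalso
          have : (M:ℝ) = 2 := by rw [hMv]; norm_num
          linarith
      have hmem : itop κ ∉ t := by
        intro hc
        have := hgthalf hc
        linarith
      exact Or.inl ⟨by omega, hmem⟩
  · intro hc
    unfold cond at hc
    have key : 0 ≤ (M:ℝ) + 2*x ∧ (M:ℝ) + 2*x < 3 := by
      rcases hc with ⟨hB, hmem⟩ | hB | hB | ⟨hB, hmem⟩
      · have hMv : M = 2 := by omega
        have hxlt := hlthalf hmem
        constructor
        · rw [hMv]; push_cast; linarith
        · rw [hMv]; push_cast; linarith
      · have hMv : M = 1 := by omega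
        constructor
        · rw [hMv]; push_cast; linarith
        · rw [hMv]; push_cast; linarith
      · have hMv : M = 0 := by omega
        constructor
        · rw [hMv]; push_cast; linarith
        · rw [hMv]; push_cast; linarith
      · have hMv : M = -1 := by omega
        have hxgt := hgthalf hmem
        constructor
        · rw [hMv]; push_cast; linarith
        · rw [hMv]; push_cast; linarith
    obtain ⟨hl3, hr3⟩ := key
    rw [hMr] at hl3 hr3
    constructor <;> linarith


lemma lamF_mem (h : ℤ) (κ d : ℕ) (hd : κ+7 ≤ d) (t : Finset (Fin (κ+1)))
    (hc : cond h κ t) :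
    IsFPP (Pvert 2 d) (lamF h κ d (bits κ t)) ∧
    (∑ j, lamF h κ d (bits κ t) j) = (h:ℝ) ∧
    ∃ b : ℤ, Odd b ∧ 0 < b ∧ b < 2^(κ+2) ∧
      lamF h κ d (bits κ t) ⟨2, by omega⟩ = (b:ℝ) / 2^(κ+2) := by
  set s := bits κ t with hs
  have hlam0 := (lam0_iff h κ t).2 hc
  rw [← hs] at hlam0
  refine ⟨⟨?_, ⟨h, lamF_sum hd⟩, ?_⟩, lamF_sum hd, ?_⟩
  · -- bounds
    rintro ⟨jv, hjv⟩
    rcases Nat.eq_zero_or_pos jv with h0 | h0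
    · subst h0
      rw [lamF_eval0]
      exact hlam0
    rcases Nat.lt_or_ge jv 2 with h1 | h1
    · have : jv = 1 := by omega
      subst this
      rw [lamF_eval1]
      have := w_pos s (κ+1)
      have := w_lt_one s (κ+1)
      constructor <;> linarith
    rcases Nat.lt_or_ge jv (κ+4) with h2 | h2
    · rw [lamF_eval₂ h1 (by omega)]
      exact ⟨le_of_lt (w_pos s _), w_lt_one s _⟩
    · rw [lamF_eval_top h2]
      norm_num
  · -- lattice conditions
    rintro ⟨jv, hjv⟩
    rw [sum_pvert (by omega) (lamF h κ d s) ⟨jv, hjv⟩]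
    have hvv : ((⟨jv, hjv⟩ : Fin (d-1)) : ℕ) = jv := rfl
    rcases Nat.eq_zero_or_pos jv with h0 | h0
    · subst h0
      rw [dif_pos hvv, dif_pos (by omega : 0 + 2 < d)]
      rw [lamF_eval1, lamF_eval₂ (by omega) (by omega) (by omega : (2:ℕ) < d)]
      refine ⟨1, ?_⟩
      rw [show κ+3-2 = κ+1 from by omega]
      norm_num
    rcases Nat.lt_or_ge jv (κ+2) with h1 | h1
    · -- 1 ≤ jv ≤ κ+1
      rw [dif_neg (by omega), dif_pos (by omega : jv + 2 < d)]
      rw [lamF_eval₂ (by omega) (by omega) (by omega : jv+1 < d),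
        lamF_eval₂ (by omega) (by omega)]
      have e1 : κ+3-(jv+1) = (κ+1-jv)+1 := by omega
      have e2 : κ+3-(jv+2) = κ+1-jv := by omega
      rw [e1, e2]
      refine ⟨if s (κ+1-jv) then 2 else 1, ?_⟩
      have e3 : 2 * w s ((κ+1-jv)+1) + w s (κ+1-jv) = cb s (κ+1-jv) := by
        rw [w_succ]; ring
      unfold cb at e3
      split_ifs at e3 ⊢ <;> push_cast <;> linarith
    rcases Nat.lt_or_ge jv (κ+3) with h2 | h2
    · -- jv = κ+2
      have : jv = κ+2 := by omega
      subst this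
      rw [dif_neg (by omega), dif_pos (by omega : (κ+2) + 2 < d)]
      rw [lamF_eval₂ (by omega) (by omega) (by omega : κ+2+1 < d),
        lamF_eval_top (by omega)]
      have e1 : κ+3-(κ+2+1) = 0 := by omega
      rw [e1, w_zero]
      exact ⟨1, by norm_num⟩
    · -- jv ≥ κ+3
      rw [dif_neg (by omega)]
      rw [lamF_eval_top (by omega) (by omega : jv+1 < d)]
      refine ⟨0, ?_⟩
      split_ifs with h3
      · rw [lamF_eval_top (by omega)]
        norm_num
      · norm_num
  · -- λ₂ value
    obtain ⟨o, ho, hop, holt, hw⟩ := w_odd s (κ+1)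
    refine ⟨(o:ℤ), by exact_mod_cast ho, by exact_mod_cast hop, by exact_mod_cast holt, ?_⟩
    rw [lamF_eval₂ (le_refl 2) (by omega) (by omega : (2:ℕ) < d)]
    rw [show κ+3-2 = κ+1 from by omega, hw]
    norm_num

lemma lamF_inj (h : ℤ) (κ d : ℕ) (hd : κ+7 ≤ d) :
    Function.Injective (fun t : Finset (Fin (κ+1)) => lamF h κ d (bits κ t)) := by
  intro t t' he
  simp only at he
  have hw : ∀ m, m ≤ κ+1 → w (bits κ t) m = w (bits κ t') m := by
    intro m hm
    have h1 := congrFun he (⟨κ+3-m, by omega⟩ : Fin d)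
    rw [lamF_eval₂ (by omega) (by omega), lamF_eval₂ (by omega) (by omega)] at h1
    rwa [show κ+3-(κ+3-m) = m from by omega] at h1
  have hbit : ∀ m, m ≤ κ → bits κ t m = bits κ t' m := by
    intro m hm
    have e1 : 2 * w (bits κ t) (m+1) + w (bits κ t) m = cb (bits κ t) m := by
      rw [w_succ]; ring
    have e2 : 2 * w (bits κ t') (m+1) + w (bits κ t') m = cb (bits κ t') m := by
      rw [w_succ]; ring
    have e3 : cb (bits κ t) m = cb (bits κ t') m := by
      rw [← e1, ← e2, hw m (by omega), hw (m+1) (by omega)]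
    unfold cb at e3
    by_cases b1 : bits κ t m <;> by_cases b2 : bits κ t' m <;>
      simp [b1, b2] at e3 ⊢ <;> norm_num at e3
  ext i
  have hb := hbit i.1 (by omega)
  rw [bits_eq, bits_eq] at hb
  simpa using hb


lemma fmk {d : ℕ} {a b : ℕ} (h : a = b) {ha : a < d} {hb : b < d} :
    (⟨a, ha⟩ : Fin d) = ⟨b, hb⟩ := by subst h; rfl

lemma sum_pvert' {d : ℕ} (hd : 3 ≤ d) (lam : Fin d → ℝ) (c : ℕ) (hc : c < d-1) :
    ∑ i, lam i * Pvert 2 d i ⟨c, hc⟩ =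
      (if h0 : c = 0 then lam ⟨1, by omega⟩ else 2 * lam ⟨c+1, by omega⟩)
      + (if hj : c+2 < d then lam ⟨c+2, hj⟩ else 0) := by
  rw [sum_pvert hd lam ⟨c, hc⟩]

lemma mem_lamF (h : ℤ) (κ d : ℕ) (hd : κ+7 ≤ d) (lam : Fin d → ℝ)
    (hfpp : IsFPP (Pvert 2 d) lam) (hsum : (∑ j, lam j) = (h:ℝ))
    (hb : ∃ b : ℤ, Odd b ∧ 0 < b ∧ b < 2^(κ+2) ∧
      lam ⟨2, by omega⟩ = (b:ℝ)/2^(κ+2)) :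
    ∃ t : Finset (Fin (κ+1)), cond h κ t ∧ lam = lamF h κ d (bits κ t) := by
  classical
  obtain ⟨hbnd, hzsum, hlat⟩ := hfpp
  -- the two-term lattice constraints
  have P : ∀ j : ℕ, 2 ≤ j → ∀ hj1 : j+1 < d,
      ∃ z : ℤ, lam ⟨j+1, hj1⟩ + 2 * lam ⟨j, by omega⟩ = z := by
    intro j h2 hj1
    obtain ⟨z, hz⟩ := hlat ⟨j-1, by omega⟩
    rw [sum_pvert' (by omega) lam (j-1) (by omega)] at hz
    rw [dif_neg (by omega), dif_pos (by omega : (j-1)+2 < d)] at hz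
    refine ⟨z, ?_⟩
    rw [fmk (show (j-1)+1 = j from by omega) (hb := by omega), fmk (show (j-1)+2 = j+1 from by omega) (hb := by omega)] at hz
    linear_combination hz
  have P0 : ∃ z : ℤ, lam ⟨1, by omega⟩ + lam ⟨2, by omega⟩ = z := by
    obtain ⟨z, hz⟩ := hlat ⟨0, by omega⟩
    rw [sum_pvert' (by omega) lam 0 (by omega)] at hz
    rw [dif_pos rfl, dif_pos (by omega : 0+2 < d)] at hz
    exact ⟨z, hz⟩
  obtain ⟨b, hbodd, hbpos, hblt, hb2⟩ := hb
  -- Step A : dyadic structure of λ_{2+m}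
  have A : ∀ m, m ≤ κ+1 → ∀ hm : 2+m < d,
      ∃ o : ℤ, Odd o ∧ 0 < o ∧ (o:ℝ) < 2^(κ+2-m) ∧ lam ⟨2+m, hm⟩ = (o:ℝ) / 2^(κ+2-m) := by
    intro m
    induction m with
    | zero =>
      intro _ hm
      refine ⟨b, hbodd, hbpos, ?_, ?_⟩
      · have : (b:ℝ) < 2^(κ+2) := by exact_mod_cast hblt
        simpa using this
      · rw [fmk (show 2+0 = 2 from rfl)]
        simpa using hb2
    | succ m ih =>
      intro hm1 hmd
      obtain ⟨o, ho, hop, holt, hlamm⟩ := ih (by omega) (by omega)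
      obtain ⟨z, hz⟩ := P (2+m) (by omega) (by omega : (2+m)+1 < d)
      rw [fmk (show (2+m)+1 = 2+(m+1) from by omega) (hb := hmd)] at hz
      rw [hlamm] at hz
      set e := κ+2-m with he
      have he2 : 2 ≤ e := by omega
      have hee : κ+2-(m+1) = e-1 := by omega
      have hepow : (2:ℝ)^e = 2^(e-1)*2 := by
        rw [← pow_succ]
        congr 1
        omega
      have hpowpos : (0:ℝ) < 2^(e-1) := by positivity
      refine ⟨z*2^(e-1) - o, ?_, ?_, ?_, ?_⟩
      · apply Even.sub_odd _ ho
        have h21 : Even ((2:ℤ)^(e-1)) := (Int.even_pow).2 ⟨even_two, by omega⟩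
        exact h21.mul_left z
      · -- positivity
        have hge : 0 ≤ lam ⟨2+(m+1), hmd⟩ := (hbnd _).1
        have hval : lam ⟨2+(m+1), hmd⟩ = ((z*2^(e-1) - o : ℤ) : ℝ)/2^(e-1) := by
          have : lam ⟨2+(m+1), hmd⟩ = (z:ℝ) - 2*((o:ℝ)/2^e) := by linear_combination hz
          rw [this, hepow]
          push_cast
          field_simp
        have hnonneg : (0:ℝ) ≤ ((z*2^(e-1) - o : ℤ) : ℝ) := by
          by_contra hcon
          push_neg at hcon
          rw [hval] at hge
          have : ((z*2^(e-1) - o : ℤ) : ℝ)/2^(e-1) < 0 := div_neg_of_neg_of_pos hcon hpowpos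
          linarith
        have hne : (z*2^(e-1) - o : ℤ) ≠ 0 := by
          intro hc
          have : Odd (0:ℤ) := by
            rw [← hc]
            apply Even.sub_odd _ ho
            exact ((Int.even_pow).2 ⟨even_two, by omega⟩).mul_left z
          simp [Int.odd_iff] at this
        have : (0:ℤ) ≤ z*2^(e-1) - o := by exact_mod_cast hnonneg
        omega
      · -- upper bound
        have hlt : lam ⟨2+(m+1), hmd⟩ < 1 := (hbnd _).2
        have hval : lam ⟨2+(m+1), hmd⟩ = ((z*2^(e-1) - o : ℤ) : ℝ)/2^(e-1) := by
          have : lam ⟨2+(m+1), hmd⟩ = (z:ℝ) - 2*((o:ℝ)/2^e) := by linear_combination hz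
          rw [this, hepow]
          push_cast
          field_simp
        rw [hval, div_lt_one hpowpos] at hlt
        rw [hee]
        exact_mod_cast hlt
      · rw [hee]
        have : lam ⟨2+(m+1), hmd⟩ = (z:ℝ) - 2*((o:ℝ)/2^e) := by linear_combination hz
        rw [this, hepow]
        push_cast
        field_simp
  -- top value is 1/2
  have Atop : lam ⟨κ+3, by omega⟩ = 1/2 := by
    obtain ⟨o, ho, hop, holt, hAv⟩ := A (κ+1) (le_refl _) (by omega)
    have h1 : κ+2-(κ+1) = 1 := by omega
    rw [h1] at holt hAv
    have ho1 : o = 1 := by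
      have : o < 2 := by exact_mod_cast (by simpa using holt : (o:ℝ) < 2)
      rcases ho with ⟨m', hm'⟩
      omega
    rw [fmk (show 2+(κ+1) = κ+3 from by omega) (hb := by omega)] at hAv
    rw [hAv, ho1]
    norm_num
  -- Step B : zeros above κ+3
  have B : ∀ j, κ+4 ≤ j → ∀ hj : j < d, lam ⟨j, hj⟩ = 0 := by
    intro j
    induction j using Nat.strong_induction_on with
    | _ j ih =>
      intro hj4 hjd
      obtain ⟨z, hz⟩ := P (j-1) (by omega) (by omega : (j-1)+1 < d)
      rw [fmk (show (j-1)+1 = j from by omega) (hb := hjd)] at hz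
      have hprev : lam ⟨j-1, by omega⟩ = if j = κ+4 then 1/2 else 0 := by
        rcases eq_or_lt_of_le hj4 with hcase | hcase
        · rw [if_pos hcase.symm, fmk (show j-1 = κ+3 from by omega)]
          exact Atop
        · rw [if_neg (by omega)]
          exact ih (j-1) (by omega) (by omega) (by omega)
      have hge : 0 ≤ lam ⟨j, hjd⟩ := (hbnd _).1
      have hlt : lam ⟨j, hjd⟩ < 1 := (hbnd _).2
      by_cases hcase : j = κ+4
      · rw [if_pos hcase] at hprev
        rw [hprev] at hz
        have hzval : z = 1 := by
          have h1 : (0:ℝ) ≤ (z:ℝ) - 1 := by linarith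
          have h2 : (z:ℝ) - 1 < 1 := by linarith
          have h1' : (1:ℤ) ≤ z := by exact_mod_cast (by linarith : (1:ℝ) ≤ (z:ℝ))
          have h2' : (z:ℤ) < 2 := by exact_mod_cast (by linarith : (z:ℝ) < 2)
          omega
        rw [hzval] at hz
        push_cast at hz
        linarith
      · rw [if_neg hcase] at hprev
        rw [hprev] at hz
        have hzval : z = 0 := by
          have h1' : (0:ℤ) ≤ z := by exact_mod_cast (by linarith : (0:ℝ) ≤ (z:ℝ))
          have h2' : (z:ℤ) < 1 := by exact_mod_cast (by linarith : (z:ℝ) < 1)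
          omega
        rw [hzval] at hz
        push_cast at hz
        linarith
  -- λ₁ = 1 - λ₂
  have hl2pos : 0 < lam ⟨2, by omega⟩ := by
    rw [hb2]
    have : (0:ℝ) < (b:ℝ) := by exact_mod_cast hbpos
    positivity
  have hC : lam ⟨1, by omega⟩ = 1 - lam ⟨2, by omega⟩ := by
    obtain ⟨z, hz0⟩ := P0
    have h1 : 0 ≤ lam ⟨1, by omega⟩ := (hbnd _).1
    have h2 : lam ⟨1, by omega⟩ < 1 := (hbnd _).2
    have h3 : lam ⟨2, by omega⟩ < 1 := (hbnd _).2
    have hzval : z = 1 := by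
      have ha : (0:ℝ) < (z:ℝ) := by linarith
      have hb' : (z:ℝ) < 2 := by linarith
      have ha' : (0:ℤ) < z := by exact_mod_cast ha
      have hb'' : (z:ℤ) < 2 := by exact_mod_cast hb'
      omega
    rw [hzval] at hz0
    push_cast at hz0
    linarith
  -- the bit set
  set t : Finset (Fin (κ+1)) := Finset.univ.filter
    (fun i => 2 * lam ⟨κ+2-i.1, by omega⟩ + lam ⟨κ+3-i.1, by omega⟩ = 2) with ht
  have hmem_t : ∀ m : ℕ, ∀ hm : m < κ+1,
      ((⟨m, hm⟩ : Fin (κ+1)) ∈ t ↔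
        2 * lam ⟨κ+2-m, by omega⟩ + lam ⟨κ+3-m, by omega⟩ = 2) := by
    intro m hm
    rw [ht, Finset.mem_filter]
    simp
  -- Step E : lam matches w (bits κ t)
  have E : ∀ m, m ≤ κ+1 → lam ⟨κ+3-m, by omega⟩ = w (bits κ t) m := by
    intro m
    induction m with
    | zero =>
      intro _
      rw [w_zero, fmk (show κ+3-0 = κ+3 from rfl)]
      exact Atop
    | succ m ih =>
      intro hm1
      have ihm := ih (by omega)
      obtain ⟨z, hz⟩ := P (κ+2-m) (by omega) (by omega : (κ+2-m)+1 < d)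
      rw [fmk (show (κ+2-m)+1 = κ+3-m from by omega) (hb := by omega)] at hz
      rw [ihm] at hz
      -- bounds
      obtain ⟨o, ho, hop, holt, hAv⟩ := A (κ-m) (by omega) (by omega)
      rw [fmk (show 2+(κ-m) = κ+2-m from by omega) (hb := by omega)] at hAv
      have hpos2 : 0 < lam ⟨κ+2-m, by omega⟩ := by
        rw [hAv]
        have : (0:ℝ) < (o:ℝ) := by exact_mod_cast hop
        positivity
      have hlt2 : lam ⟨κ+2-m, by omega⟩ < 1 := (hbnd _).2
      have hw0 : 0 < w (bits κ t) m := w_pos _ _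
      have hw1 : w (bits κ t) m < 1 := w_lt_one _ _
      have hz12 : z = 1 ∨ z = 2 := by
        have ha : (0:ℝ) < (z:ℝ) := by linarith
        have hb' : (z:ℝ) < 3 := by linarith
        have ha' : (0:ℤ) < z := by exact_mod_cast ha
        have hb'' : (z:ℤ) < 3 := by exact_mod_cast hb'
        omega
      have hbitm : bits κ t m = decide ((⟨m, by omega⟩ : Fin (κ+1)) ∈ t) :=
        bits_eq κ t ⟨m, by omega⟩
      rw [fmk (show κ+3-(m+1) = κ+2-m from by omega) (hb := by omega)]
      rw [w_succ]
      unfold cb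
      rcases hz12 with hzv | hzv
      · -- z = 1 : bit is false
        rw [hzv] at hz
        push_cast at hz
        have hmem : ¬ ((⟨m, by omega⟩ : Fin (κ+1)) ∈ t) := by
          rw [hmem_t m (by omega)]
          rw [ihm]
          intro hcon
          linarith
        rw [hbitm, decide_eq_false hmem]
        simp only [Bool.false_eq_true, if_false]
        linarith
      · -- z = 2 : bit is true
        rw [hzv] at hz
        push_cast at hz
        have hmem : ((⟨m, by omega⟩ : Fin (κ+1)) ∈ t) := by
          rw [hmem_t m (by omega)]
          rw [ihm]
          linarith
        rw [hbitm, decide_eq_true hmem]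
        simp only [if_true]
        linarith
  -- all coordinates except 0 agree with lamF
  have F1 : ∀ jf : Fin d, (jf:ℕ) ≠ 0 → lam jf = lamF h κ d (bits κ t) jf := by
    rintro ⟨jv, hjv⟩ hne
    simp only [ne_eq] at hne
    rcases Nat.lt_or_ge jv 2 with h1 | h1
    · have : jv = 1 := by omega
      subst this
      rw [lamF_eval1, hC]
      have := E (κ+1) (le_refl _)
      rw [fmk (show κ+3-(κ+1) = 2 from by omega) (hb := by omega)] at this
      rw [this]
    rcases Nat.lt_or_ge jv (κ+4) with h2 | h2
    · rw [lamF_eval₂ h1 (by omega)]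
      have := E (κ+3-jv) (by omega)
      rw [fmk (show κ+3-(κ+3-jv) = jv from by omega) (hb := hjv)] at this
      exact this
    · rw [lamF_eval_top h2]
      exact B jv (by omega) hjv
  -- coordinate 0 agrees via the sums
  have hsumF := lamF_sum (h := h) (s := bits κ t) hd
  have F0 : lam ⟨0, by omega⟩ = lamF h κ d (bits κ t) ⟨0, by omega⟩ := by
    have e1 : ∑ j, lam j = lam ⟨0, by omega⟩ +
        ∑ j ∈ Finset.univ.erase ⟨0, by omega⟩, lam j :=
      (Finset.add_sum_erase _ lam (Finset.mem_univ _)).symm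
    have e2 : ∑ j, lamF h κ d (bits κ t) j = lamF h κ d (bits κ t) ⟨0, by omega⟩ +
        ∑ j ∈ Finset.univ.erase ⟨0, by omega⟩, lamF h κ d (bits κ t) j :=
      (Finset.add_sum_erase _ _ (Finset.mem_univ _)).symm
    have e3 : ∑ j ∈ Finset.univ.erase (⟨0, by omega⟩ : Fin d), lam j =
        ∑ j ∈ Finset.univ.erase ⟨0, by omega⟩, lamF h κ d (bits κ t) j := by
      apply Finset.sum_congr rfl
      intro j hj
      rw [Finset.mem_erase] at hj
      apply F1
      intro hc
      exact hj.1 (Fin.ext hc)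
    rw [hsum] at e1
    rw [hsumF] at e2
    linarith
  -- conclude
  refine ⟨t, ?_, ?_⟩
  · apply (lam0_iff h κ t).1
    have hb0 := hbnd ⟨0, by omega⟩
    rw [F0, lamF_eval0] at hb0
    exact hb0
  · funext jf
    by_cases hjf : (jf:ℕ) = 0
    · have : jf = ⟨0, by omega⟩ := Fin.ext hjf
      rw [this]
      exact F0
    · exact F1 jf hjf


end Stmt13Aux

open Stmt13Aux in
theorem stmt13 (h k : ℤ) (hh : 2 ≤ h)
    (hk1 : ⌈(3 * ((h : ℚ) - 1)) / 2⌉ ≤ k) (hk2 : k ≤ 3 * h - 3) :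
    ∃ N : ℕ, ∀ d : ℕ, ∀ _hNd : N ≤ d, ∀ _hd : 3 ≤ d,
      (Set.ncard {lam : Fin d → ℝ | IsFPP (Pvert 2 d) lam ∧ (∑ j, lam j) = (h : ℝ) ∧
        ∃ b : ℤ, Odd b ∧ 0 < b ∧ b < 2 ^ k.toNat ∧
          lam ⟨2, by omega⟩ = (b : ℝ) / (2 : ℝ) ^ k.toNat} : ℤ) = fkh k h := by
  classical
  have hk2' : (2:ℤ) ≤ k := by
    have h1 : (1:ℤ) < ⌈(3 * ((h : ℚ) - 1)) / 2⌉ := by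
      rw [Int.lt_ceil]
      have : (2:ℚ) ≤ (h:ℚ) := by exact_mod_cast hh
      push_cast
      linarith
    omega
  set κ : ℕ := k.toNat - 2 with hκ
  have hktn : k.toNat = κ + 2 := by omega
  have hkκ : k = (κ:ℤ) + 2 := by omega
  refine ⟨κ+7, ?_⟩
  intro d hNd hd3
  have hd : κ+7 ≤ d := hNd
  set Φ : Finset (Fin (κ+1)) → (Fin d → ℝ) := fun t => lamF h κ d (bits κ t) with hΦ
  set T : Finset (Finset (Fin (κ+1))) := Finset.univ.filter (cond h κ) with hT
  have hset : {lam : Fin d → ℝ | IsFPP (Pvert 2 d) lam ∧ (∑ j, lam j) = (h : ℝ) ∧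
        ∃ b : ℤ, Odd b ∧ 0 < b ∧ b < 2 ^ k.toNat ∧
          lam ⟨2, by omega⟩ = (b : ℝ) / (2 : ℝ) ^ k.toNat} = Φ '' (T : Set _) := by
    ext lam
    simp only [Set.mem_setOf_eq, Set.mem_image, Finset.mem_coe, hT, Finset.mem_filter,
      Finset.mem_univ, true_and]
    constructor
    · rintro ⟨hfpp, hsum, hb⟩
      rw [hktn] at hb
      obtain ⟨t, hc, hlam⟩ := mem_lamF h κ d (by omega) lam hfpp hsum hb
      exact ⟨t, hc, hlam.symm⟩
    · rintro ⟨t, hc, hlam⟩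
      obtain ⟨h1, h2, h3⟩ := lamF_mem h κ d (by omega) t hc
      subst hlam
      refine ⟨h1, h2, ?_⟩
      rw [hktn]
      exact h3
  rw [hset, Set.ncard_image_of_injOn ((lamF_inj h κ d (by omega)).injOn),
    Set.ncard_coe_finset]
  -- counting
  set F1 : Finset (Finset (Fin (κ+1))) := Finset.univ.filter
    (fun t => (t.card:ℤ) = 3*h - 7 - κ ∧ itop κ ∉ t) with hF1
  set F2 : Finset (Finset (Fin (κ+1))) := Finset.univ.filter
    (fun t => (t.card:ℤ) = 3*h - 6 - κ) with hF2
  set F3 : Finset (Finset (Fin (κ+1))) := Finset.univ.filter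
    (fun t => (t.card:ℤ) = 3*h - 5 - κ) with hF3
  set F4 : Finset (Finset (Fin (κ+1))) := Finset.univ.filter
    (fun t => (t.card:ℤ) = 3*h - 4 - κ ∧ itop κ ∈ t) with hF4
  have hTeq : T = F1 ∪ (F2 ∪ (F3 ∪ F4)) := by
    ext u
    simp only [hT, hF1, hF2, hF3, hF4, Finset.mem_union, Finset.mem_filter,
      Finset.mem_univ, true_and]
    unfold Stmt13Aux.cond
    tauto
  have hmemF1 : ∀ u ∈ F1, (u.card:ℤ) = 3*h - 7 - κ := by
    intro u hu; rw [hF1, Finset.mem_filter] at hu; exact hu.2.1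
  have hmemF2 : ∀ u ∈ F2, (u.card:ℤ) = 3*h - 6 - κ := by
    intro u hu; rw [hF2, Finset.mem_filter] at hu; exact hu.2
  have hmemF3 : ∀ u ∈ F3, (u.card:ℤ) = 3*h - 5 - κ := by
    intro u hu; rw [hF3, Finset.mem_filter] at hu; exact hu.2
  have hmemF4 : ∀ u ∈ F4, (u.card:ℤ) = 3*h - 4 - κ := by
    intro u hu; rw [hF4, Finset.mem_filter] at hu; exact hu.2.1
  have hd34 : Disjoint F3 F4 := Finset.disjoint_left.mpr (by
    intro u h3 h4
    have := hmemF3 u h3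
    have := hmemF4 u h4
    omega)
  have hd234 : Disjoint F2 (F3 ∪ F4) := Finset.disjoint_left.mpr (by
    intro u h2 hu
    rcases Finset.mem_union.1 hu with h' | h'
    · have := hmemF2 u h2; have := hmemF3 u h'; omega
    · have := hmemF2 u h2; have := hmemF4 u h'; omega)
  have hd1234 : Disjoint F1 (F2 ∪ (F3 ∪ F4)) := Finset.disjoint_left.mpr (by
    intro u h1 hu
    rcases Finset.mem_union.1 hu with h' | h'
    · have := hmemF1 u h1; have := hmemF2 u h'; omega
    rcases Finset.mem_union.1 h' with h'' | h''
    · have := hmemF1 u h1; have := hmemF3 u h''; omega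
    · have := hmemF1 u h1; have := hmemF4 u h''; omega)
  have hcard : T.card = F1.card + (F2.card + (F3.card + F4.card)) := by
    rw [hTeq, Finset.card_union_of_disjoint hd1234,
      Finset.card_union_of_disjoint hd234, Finset.card_union_of_disjoint hd34]
  have e1 : ((F1.card : ℤ)) = binomZ κ (3*h - 7 - κ) := by
    rw [hF1, card_filter_cardZ_notMem (3*h - 7 - κ) (itop κ) (by omega)]
    congr 1 <;> push_cast <;> omega
  have e2 : ((F2.card : ℤ)) = binomZ ((κ:ℤ)+1) (3*h - 6 - κ) := by
    rw [hF2, card_filter_cardZ (3*h - 6 - κ)]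
    congr 1 <;> push_cast <;> omega
  have e3 : ((F3.card : ℤ)) = binomZ ((κ:ℤ)+1) (3*h - 5 - κ) := by
    rw [hF3, card_filter_cardZ (3*h - 5 - κ)]
    congr 1 <;> push_cast <;> omega
  have e4 : ((F4.card : ℤ)) = binomZ κ (3*h - 5 - κ) := by
    rw [hF4, card_filter_cardZ_mem (3*h - 4 - κ) (itop κ) (by omega)]
    congr 1 <;> push_cast <;> omega
  have hp1 : binomZ ((κ:ℤ)+1) (3*h - 6 - κ)
      = binomZ κ (3*h - 6 - κ) + binomZ κ (3*h - 7 - κ) := by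
    rw [binomZ_pascal κ (3*h - 6 - κ) (by positivity),
      show 3*h - 6 - (κ:ℤ) - 1 = 3*h - 7 - (κ:ℤ) from by ring]
  have hp2 : binomZ ((κ:ℤ)+1) (3*h - 5 - κ)
      = binomZ κ (3*h - 5 - κ) + binomZ κ (3*h - 6 - κ) := by
    rw [binomZ_pascal κ (3*h - 5 - κ) (by positivity),
      show 3*h - 5 - (κ:ℤ) - 1 = 3*h - 6 - (κ:ℤ) from by ring]
  have hfkh : fkh k h = 2 * (binomZ κ (3*h - 5 - κ) + binomZ κ (3*h - 6 - κ) +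
      binomZ κ (3*h - 7 - κ)) := by
    unfold fkh
    rw [show k - 2 = (κ:ℤ) from by omega,
      show 3*(h-1) - k - 2 = 3*h - 7 - κ from by omega,
      show 3*(h-1) - k - 1 = 3*h - 6 - κ from by omega,
      show 3*(h-1) - k = 3*h - 5 - κ from by omega]
  rw [hfkh]
  push_cast [hcard]
  rw [e1, e2, e3, e4, hp1, hp2]
  ring
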